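/- For 0 < q < 1, a positive integer r, and real numbers (α_1, ..., α_r) with α_1 + ... + α_j > 0 for all j = 1, ..., r, the family (q^{k_1 α_1 + ... + k_r α_r} / ([k_1]^{α_1} ... [k_r]^{α_r})) indexed over integer tuples k_1 > k_2 > ... > k_r ≥ 1 is summable. -/

import Mathlib

/-- The q-analogue `[k]_q = (1 - q^k)/(1 - q)`. -/
noncomputable def qNum (q : ℝ) (k : ℕ) : ℝ := (1 - q ^ k) / (1 - q)

open Finset

/-- Successive differences. -/
def qmzvDif {r : ℕ} (k : Fin r → ℕ) (j : Fin r) : ℕ :=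
  k j - (if h : (j : ℕ) + 1 < r then k ⟨(j : ℕ) + 1, h⟩ else 0)

lemma qmzv_reconstruct {r : ℕ} (k : Fin r → ℕ)
    (hk : ∀ i j : Fin r, i < j → k j < k i) :
    ∀ (d : ℕ) (j : Fin r), (j : ℕ) + d + 1 = r →
      ∑ i ∈ univ.filter (j ≤ ·), qmzvDif k i = k j := by
  intro d
  induction d with
  | zero =>
    intro j hj
    have hfil : univ.filter (j ≤ ·) = {j} := by
      ext i
      simp only [mem_filter, mem_univ, true_and, mem_singleton]
      constructor
      · intro hle
        have hi := i.isLt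
        have : (j : ℕ) ≤ (i : ℕ) := hle
        exact Fin.ext (by omega)
      · rintro rfl; exact le_rfl
    rw [hfil, Finset.sum_singleton, qmzvDif, dif_neg (by omega)]
    omega
  | succ d ih =>
    intro j hj
    have hj1 : (j : ℕ) + 1 < r := by omega
    set j' : Fin r := ⟨(j : ℕ) + 1, hj1⟩ with hj'
    have hfil : univ.filter (j ≤ ·) = insert j (univ.filter (j' ≤ ·)) := by
      ext i
      simp only [mem_filter, mem_univ, true_and, mem_insert]
      constructor
      · intro hle
        have : (j : ℕ) ≤ (i : ℕ) := hle
        rcases eq_or_lt_of_le this with h | h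
        · exact Or.inl (Fin.ext h.symm)
        · exact Or.inr (by show (j' : ℕ) ≤ (i : ℕ); simp [hj']; omega)
      · rintro (rfl | hle)
        · exact le_rfl
        · have : (j' : ℕ) ≤ (i : ℕ) := hle
          show (j : ℕ) ≤ (i : ℕ); simp [hj'] at this; omega
    have hnot : j ∉ univ.filter (j' ≤ ·) := by
      simp only [mem_filter, mem_univ, true_and]
      intro hle
      have : (j' : ℕ) ≤ (j : ℕ) := hle
      simp [hj'] at this
    have hlt : k j' < k j := hk j j' (by show (j : ℕ) < (j' : ℕ); simp [hj'])
    rw [hfil, Finset.sum_insert hnot, ih j' (by simp [hj']; omega)]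
    rw [qmzvDif, dif_pos hj1]
    have : k ⟨(j : ℕ) + 1, hj1⟩ = k j' := rfl
    omega

lemma summable_pi_geometric : ∀ (n : ℕ) (x : Fin n → ℝ), (∀ i, 0 ≤ x i) → (∀ i, x i < 1) →
    Summable (fun m : Fin n → ℕ => ∏ i, x i ^ m i) := by
  intro n
  induction n with
  | zero =>
    intro x _ _
    have : (fun m : Fin 0 → ℕ => ∏ i, x i ^ m i) = fun _ => 1 := by
      funext m; simp
    rw [this]
    haveI : Subsingleton (Fin 0 → ℕ) := ⟨fun a b => funext fun i => i.elim0⟩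
    haveI : Fintype (Fin 0 → ℕ) := Fintype.ofSubsingleton (fun i => i.elim0)
    exact (hasSum_fintype _).summable
  | succ n ih =>
    intro x h0 h1
    have hs : Summable (fun p : ℕ × (Fin n → ℕ) =>
        x 0 ^ p.1 * ∏ i, x i.succ ^ p.2 i) :=
      Summable.mul_of_nonneg (f := fun m : ℕ => x 0 ^ m)
        (g := fun m : Fin n → ℕ => ∏ i, x i.succ ^ m i)
        (summable_geometric_of_lt_one (h0 0) (h1 0))
        (ih (fun i => x i.succ) (fun i => h0 _) (fun i => h1 _))
        (fun m => pow_nonneg (h0 0) m)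
        (fun m => Finset.prod_nonneg fun i _ => pow_nonneg (h0 _) _)
    have hinj : Function.Injective (Fin.consEquiv (fun _ : Fin (n + 1) => ℕ)).symm :=
      (Fin.consEquiv (fun _ : Fin (n + 1) => ℕ)).symm.injective
    have := hs.comp_injective hinj
    convert this using 1
    case e'_3 => rfl
    funext m
    simp [Fin.consEquiv, Fin.prod_univ_succ, Function.comp, Fin.tail]

theorem qmzv_real_summable (q : ℝ) (hq0 : 0 < q) (hq1 : q < 1)
    (r : ℕ) (hr : 1 ≤ r) (α : Fin r → ℝ)
    (hα : ∀ j : Fin r, 0 < ∑ i ∈ Finset.univ.filter (· ≤ j), α i) :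
    Summable (fun k : {k : Fin r → ℕ // (∀ i j : Fin r, i < j → k j < k i) ∧ ∀ i, 1 ≤ k i} =>
      ∏ i : Fin r, (q ^ ((k.1 i : ℝ) * α i)) / (qNum q (k.1 i)) ^ (α i)) := by
  have hq1' : (0 : ℝ) < 1 - q := by linarith
  set s : Fin r → ℝ := fun j => ∑ i ∈ Finset.univ.filter (· ≤ j), α i with hs
  set b : ℝ := (1 - q)⁻¹ with hb
  have hb0 : 0 < b := inv_pos.mpr hq1'
  have hb1 : 1 ≤ b := (one_le_inv₀ hq1').mpr (by linarith)
  set C : ℝ := b ^ (∑ i : Fin r, |α i|) with hC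
  set x : Fin r → ℝ := fun j => q ^ (s j) with hx
  have hx0 : ∀ j, 0 ≤ x j := fun j => Real.rpow_nonneg hq0.le _
  have hx1 : ∀ j, x j < 1 := fun j => Real.rpow_lt_one hq0.le hq1 (hα j)
  have hF : Summable (fun m : Fin r → ℕ => C * ∏ j, x j ^ m j) :=
    (summable_pi_geometric r x hx0 hx1).mul_left C
  set T := {k : Fin r → ℕ // (∀ i j : Fin r, i < j → k j < k i) ∧ ∀ i, 1 ≤ k i} with hT
  set Φ : T → (Fin r → ℕ) := fun k => qmzvDif k.1 with hΦ
  -- reconstruction for elements of T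
  have hrec : ∀ (k : T) (j : Fin r), ∑ i ∈ univ.filter (j ≤ ·), Φ k i = k.1 j := by
    intro k j
    exact qmzv_reconstruct k.1 k.2.1 (r - (j : ℕ) - 1) j (by have := j.isLt; omega)
  have hΦinj : Function.Injective Φ := by
    intro k k' h
    apply Subtype.ext
    funext j
    rw [← hrec k j, ← hrec k' j, h]
  -- exponent identity
  have hexp : ∀ k : T, ∑ j, (Φ k j : ℝ) * s j = ∑ i, (k.1 i : ℝ) * α i := by
    intro k
    have h1 : ∀ j : Fin r, (Φ k j : ℝ) * s j
        = ∑ i ∈ univ.filter (· ≤ j), (Φ k j : ℝ) * α i := by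
      intro j; rw [hs]; rw [Finset.mul_sum]
    calc ∑ j, (Φ k j : ℝ) * s j
        = ∑ j, ∑ i ∈ univ.filter (· ≤ j), (Φ k j : ℝ) * α i := by
          exact Finset.sum_congr rfl fun j _ => h1 j
      _ = ∑ i, ∑ j ∈ univ.filter (i ≤ ·), (Φ k j : ℝ) * α i := by
          refine Finset.sum_comm' ?_
          intro j i
          simp only [mem_univ, true_and, mem_filter, and_true]
      _ = ∑ i, (∑ j ∈ univ.filter (i ≤ ·), (Φ k j : ℝ)) * α i := by
          exact Finset.sum_congr rfl fun i _ => (Finset.sum_mul _ _ _).symm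
      _ = ∑ i, (k.1 i : ℝ) * α i := by
          refine Finset.sum_congr rfl fun i _ => ?_
          congr 1
          rw [← hrec k i]
          push_cast
          rfl
  -- qNum bounds
  have hqNum_one : ∀ (m : ℕ), 1 ≤ m → 1 ≤ qNum q m := by
    intro m hm
    rw [qNum, le_div_iff₀ hq1']
    have : q ^ m ≤ q ^ 1 := pow_le_pow_of_le_one hq0.le hq1.le hm
    simp at this ⊢; linarith
  have hqNum_le : ∀ (m : ℕ), qNum q m ≤ b := by
    intro m
    rw [qNum, hb, div_le_iff₀ hq1', inv_mul_cancel₀ (ne_of_gt hq1')]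
    have : 0 < q ^ m := pow_pos hq0 m
    linarith
  -- factor bound
  have hfac : ∀ (k : T) (i : Fin r),
      q ^ ((k.1 i : ℝ) * α i) / (qNum q (k.1 i)) ^ (α i)
        ≤ b ^ |α i| * q ^ ((k.1 i : ℝ) * α i) := by
    intro k i
    have h1 : 1 ≤ qNum q (k.1 i) := hqNum_one _ (k.2.2 i)
    have h2 : qNum q (k.1 i) ≤ b := hqNum_le _
    have hpos : 0 < qNum q (k.1 i) := lt_of_lt_of_le one_pos h1
    have h3 : b ^ (-|α i|) ≤ (qNum q (k.1 i)) ^ (α i) := by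
      rcases le_or_gt 0 (α i) with hα0 | hα0
      · have hA : b ^ (-|α i|) ≤ 1 :=
          Real.rpow_le_one_of_one_le_of_nonpos hb1 (neg_nonpos.mpr (abs_nonneg _))
        have hB : (1 : ℝ) ≤ (qNum q (k.1 i)) ^ (α i) := by
          calc (1 : ℝ) = 1 ^ (α i) := (Real.one_rpow _).symm
          _ ≤ (qNum q (k.1 i)) ^ (α i) := Real.rpow_le_rpow zero_le_one h1 hα0
        linarith
      · have habs : |α i| = -(α i) := abs_of_neg hα0
        rw [habs, neg_neg]
        exact Real.rpow_le_rpow_of_nonpos hpos h2 hα0.le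
    have hq3 : 0 < b ^ (-|α i|) := Real.rpow_pos_of_pos hb0 _
    have hinv : ((qNum q (k.1 i)) ^ (α i))⁻¹ ≤ (b ^ (-|α i|))⁻¹ :=
      inv_anti₀ hq3 h3
    have heq : (b ^ (-|α i|))⁻¹ = b ^ |α i| := by
      rw [Real.rpow_neg hb0.le, inv_inv]
    rw [div_eq_mul_inv, mul_comm (b ^ |α i|)]
    refine mul_le_mul_of_nonneg_left ?_ (Real.rpow_nonneg hq0.le _)
    rw [← heq]; exact hinv
  -- termwise bound against F ∘ Φ
  have hle : ∀ k : T,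
      (∏ i : Fin r, (q ^ ((k.1 i : ℝ) * α i)) / (qNum q (k.1 i)) ^ (α i))
        ≤ C * ∏ j, x j ^ (Φ k j) := by
    intro k
    have hRHS : C * ∏ j, x j ^ (Φ k j)
        = ∏ i : Fin r, (b ^ |α i| * q ^ ((k.1 i : ℝ) * α i)) := by
      have h1 : ∀ j : Fin r, x j ^ (Φ k j) = q ^ (s j * (Φ k j : ℝ)) := by
        intro j
        rw [hx, Real.rpow_mul hq0.le, Real.rpow_natCast]
      have h2 : ∏ j, x j ^ (Φ k j) = q ^ (∑ j, s j * (Φ k j : ℝ)) := by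
        rw [Real.rpow_sum_of_pos hq0]
        exact Finset.prod_congr rfl fun j _ => h1 j
      have h3 : ∑ j, s j * (Φ k j : ℝ) = ∑ i, (k.1 i : ℝ) * α i := by
        rw [← hexp k]
        exact Finset.sum_congr rfl fun j _ => mul_comm _ _
      rw [h2, h3, hC, Real.rpow_sum_of_pos hb0, Real.rpow_sum_of_pos hq0,
        ← Finset.prod_mul_distrib]
    rw [hRHS]
    refine Finset.prod_le_prod (fun i _ => ?_) (fun i _ => hfac k i)
    exact div_nonneg (Real.rpow_nonneg hq0.le _) (Real.rpow_nonneg (by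
      have := hqNum_one (k.1 i) (k.2.2 i); linarith) _)
  have hnonneg : ∀ k : T,
      0 ≤ ∏ i : Fin r, (q ^ ((k.1 i : ℝ) * α i)) / (qNum q (k.1 i)) ^ (α i) := by
    intro k
    refine Finset.prod_nonneg fun i _ => div_nonneg (Real.rpow_nonneg hq0.le _)
      (Real.rpow_nonneg ?_ _)
    have := hqNum_one (k.1 i) (k.2.2 i); linarith
  exact Summable.of_nonneg_of_le hnonneg hle (hF.comp_injective hΦinj)
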